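/- (Strict NEs are strict local maxima of the potential) In a Markov potential game satisfying d_θ(s) > 0 for all θ, s, a policy θ* is a strict Nash equilibrium if and only if it is a strict local maximum of the total potential function Φ on the feasible set X; i.e., there exists δ > 0 such that Φ(θ) < Φ(θ*) for every θ ∈ X with θ ≠ θ* and ‖θ − θ*‖ ≤ δ. -/

import Mathlib

open Finset

namespace MAMDP

variable {n : ℕ} {S : Type} [Fintype S] [DecidableEq S]
  {A : Fin n → Type} [∀ i, Fintype (A i)] [∀ i, DecidableEq (A i)]

/-- Joint product policy probability. -/
def jointPi (θ : ∀ i, S → A i → ℝ) (s : S) (a : ∀ i, A i) : ℝ :=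
  ∏ i, θ i s (a i)

/-- One-step evolution of a state distribution under the joint policy. -/
def stepDist (P : S → (∀ i, A i) → S → ℝ) (θ : ∀ i, S → A i → ℝ) (μ : S → ℝ) : S → ℝ :=
  fun s' => ∑ s, ∑ a, μ s * jointPi θ s a * P s a s'

/-- State distribution after `t` steps, starting from `μ`. -/
def visit (P : S → (∀ i, A i) → S → ℝ) (θ : ∀ i, S → A i → ℝ) (t : ℕ) (μ : S → ℝ) : S → ℝ :=
  (stepDist P θ)^[t] μ

/-- Point mass at `s0`. -/
def deltaDist (s0 : S) : S → ℝ := fun s => if s = s0 then 1 else 0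

/-- Discounted state visitation distribution `d_θ` for initial distribution `ρ`. -/
noncomputable def dvisit (P : S → (∀ i, A i) → S → ℝ) (θ : ∀ i, S → A i → ℝ) (γ : ℝ)
    (ρ : S → ℝ) (s : S) : ℝ :=
  (1 - γ) * ∑' t : ℕ, γ ^ t * visit P θ t ρ s

/-- Expected one-step reward at state `s` under the joint policy. -/
def expRew (rw : S → (∀ i, A i) → ℝ) (θ : ∀ i, S → A i → ℝ) (s : S) : ℝ :=
  ∑ a, jointPi θ s a * rw s a

/-- Value function: expected discounted sum of rewards starting from state `s`. -/
noncomputable def Vval (P : S → (∀ i, A i) → S → ℝ) (θ : ∀ i, S → A i → ℝ) (γ : ℝ)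
    (rw : S → (∀ i, A i) → ℝ) (s : S) : ℝ :=
  ∑' t : ℕ, γ ^ t * ∑ s', visit P θ t (deltaDist s) s' * expRew rw θ s'

/-- Q-function. -/
noncomputable def Qval (P : S → (∀ i, A i) → S → ℝ) (θ : ∀ i, S → A i → ℝ) (γ : ℝ)
    (rw : S → (∀ i, A i) → ℝ) (s : S) (a : ∀ i, A i) : ℝ :=
  rw s a + γ * ∑ s', P s a s' * Vval P θ γ rw s'

/-- Total discounted reward `J` under initial distribution `ρ`. -/
noncomputable def Jval (P : S → (∀ i, A i) → S → ℝ) (θ : ∀ i, S → A i → ℝ) (γ : ℝ)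
    (rw : S → (∀ i, A i) → ℝ) (ρ : S → ℝ) : ℝ :=
  ∑ s, ρ s * Vval P θ γ rw s

/-- Averaged Q-function of agent `i`: average of `Q(s, a)` with `a i = ai` fixed,
weighted by the other agents' policies. -/
noncomputable def Qbar (P : S → (∀ i, A i) → S → ℝ) (θ : ∀ i, S → A i → ℝ) (γ : ℝ)
    (rw : S → (∀ i, A i) → ℝ) (i : Fin n) (s : S) (ai : A i) : ℝ :=
  ∑ a : ∀ j, A j, if a i = ai then
    (∏ j ∈ Finset.univ.erase i, θ j s (a j)) * Qval P θ γ rw s a else 0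

/-- Averaged advantage function of agent `i`. -/
noncomputable def Abar (P : S → (∀ i, A i) → S → ℝ) (θ : ∀ i, S → A i → ℝ) (γ : ℝ)
    (rw : S → (∀ i, A i) → ℝ) (i : Fin n) (s : S) (ai : A i) : ℝ :=
  Qbar P θ γ rw i s ai - Vval P θ γ rw s

/-- Entries of the policy gradient `∇_{θ_i} J_i(θ)`:
`(1/(1-γ)) d_θ(s) Q̄_i^θ(s, a_i)`. -/
noncomputable def gradJ (P : S → (∀ i, A i) → S → ℝ) (θ : ∀ i, S → A i → ℝ) (γ : ℝ)
    (rw : S → (∀ i, A i) → ℝ) (ρ : S → ℝ) (i : Fin n) (s : S) (ai : A i) : ℝ :=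
  (1 / (1 - γ)) * dvisit P θ γ ρ s * Qbar P θ γ rw i s ai

/-- Feasibility of agent `i`'s parameters: a point of `Δ(A_i)^{|S|}`. -/
def feasibleAgent (i : Fin n) (θi : S → A i → ℝ) : Prop :=
  ∀ s, (∀ a, 0 ≤ θi s a) ∧ ∑ a, θi s a = 1

/-- Feasibility of a joint parameter `θ ∈ X = ∏_i Δ(A_i)^{|S|}`. -/
def feasible (θ : ∀ i, S → A i → ℝ) : Prop := ∀ i, feasibleAgent i (θ i)

/-- `P` is a transition kernel. -/
def stochMat (P : S → (∀ i, A i) → S → ℝ) : Prop :=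
  ∀ s a, (∀ s', 0 ≤ P s a s') ∧ ∑ s', P s a s' = 1

/-- `ρ` is a probability distribution on states. -/
def initDist (ρ : S → ℝ) : Prop := (∀ s, 0 ≤ ρ s) ∧ ∑ s, ρ s = 1

/-- Nash equilibrium. -/
def isNE (P : S → (∀ i, A i) → S → ℝ) (γ : ℝ) (r : Fin n → S → (∀ i, A i) → ℝ)
    (ρ : S → ℝ) (θ : ∀ i, S → A i → ℝ) : Prop :=
  feasible θ ∧ ∀ (i : Fin n) (θi' : S → A i → ℝ), feasibleAgent i θi' →
    Jval P (Function.update θ i θi') γ (r i) ρ ≤ Jval P θ γ (r i) ρ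

/-- Strict Nash equilibrium. -/
def strictNE (P : S → (∀ i, A i) → S → ℝ) (γ : ℝ) (r : Fin n → S → (∀ i, A i) → ℝ)
    (ρ : S → ℝ) (θ : ∀ i, S → A i → ℝ) : Prop :=
  feasible θ ∧ ∀ (i : Fin n) (θi' : S → A i → ℝ), feasibleAgent i θi' → θi' ≠ θ i →
    Jval P (Function.update θ i θi') γ (r i) ρ < Jval P θ γ (r i) ρ

/-- Markov potential game with potential `φ`. -/
def isPotential (P : S → (∀ i, A i) → S → ℝ) (γ : ℝ) (r : Fin n → S → (∀ i, A i) → ℝ)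
    (φ : S → (∀ i, A i) → ℝ) : Prop :=
  ∀ (θ : ∀ i, S → A i → ℝ), feasible θ → ∀ (i : Fin n) (θi' : S → A i → ℝ),
    feasibleAgent i θi' → ∀ s,
    Vval P (Function.update θ i θi') γ (r i) s - Vval P θ γ (r i) s
      = Vval P (Function.update θ i θi') γ φ s - Vval P θ γ φ s

/-- Squared Euclidean distance between two joint parameters. -/
def polNormSq (x y : ∀ i, S → A i → ℝ) : ℝ :=
  ∑ i, ∑ s, ∑ a, (x i s a - y i s a) ^ 2

/-- The deterministic (pure) joint policy picking `astar i s`. -/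
def purePol (astar : ∀ i : Fin n, S → A i) : ∀ i, S → A i → ℝ :=
  fun i s a => if a = astar i s then 1 else 0

end MAMDP

open MAMDP

set_option linter.unusedSectionVars false

namespace MPGAux

open MAMDP Finset

variable {n : ℕ} {S : Type} [Fintype S] [DecidableEq S]
  {A : Fin n → Type} [∀ i, Fintype (A i)] [∀ i, DecidableEq (A i)]

lemma sum_prod_pi (f : ∀ i, A i → ℝ) :
    ∑ a : ∀ i, A i, ∏ i, f i (a i) = ∏ i, ∑ ai, f i ai := by
  rw [Finset.prod_univ_sum, Fintype.piFinset_univ]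

variable {P : S → (∀ i, A i) → S → ℝ} {θ θ' : ∀ i, S → A i → ℝ} {γ : ℝ} {ρ : S → ℝ}

lemma jointPi_nonneg (hθ : feasible θ) (s : S) (a : ∀ i, A i) : 0 ≤ jointPi θ s a :=
  Finset.prod_nonneg fun i _ => (hθ i s).1 (a i)

lemma sum_jointPi (hθ : feasible θ) (s : S) : ∑ a, jointPi θ s a = 1 := by
  unfold jointPi; rw [sum_prod_pi]
  exact Finset.prod_eq_one fun i _ => (hθ i s).2

/-- Transition matrix of the induced Markov chain. -/
def qmat (P : S → (∀ i, A i) → S → ℝ) (θ : ∀ i, S → A i → ℝ) (s s1 : S) : ℝ :=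
  ∑ a, jointPi θ s a * P s a s1

lemma qmat_nonneg (hP : stochMat P) (hθ : feasible θ) (s s1 : S) : 0 ≤ qmat P θ s s1 :=
  Finset.sum_nonneg fun a _ => mul_nonneg (jointPi_nonneg hθ s a) ((hP s a).1 s1)

lemma sum_qmat (hP : stochMat P) (hθ : feasible θ) (s : S) : ∑ s1, qmat P θ s s1 = 1 := by
  unfold qmat
  rw [Finset.sum_comm]
  have h : ∀ a ∈ (univ : Finset (∀ i, A i)),
      ∑ s1, jointPi θ s a * P s a s1 = jointPi θ s a := by
    intro a _; rw [← Finset.mul_sum, (hP s a).2, mul_one]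
  rw [Finset.sum_congr rfl h, sum_jointPi hθ]

lemma stepDist_apply (μ : S → ℝ) (s1 : S) :
    stepDist P θ μ s1 = ∑ s0, μ s0 * qmat P θ s0 s1 := by
  unfold stepDist qmat
  refine Finset.sum_congr rfl fun s0 _ => ?_
  rw [Finset.mul_sum]
  exact Finset.sum_congr rfl fun a _ => by ring

lemma stepDist_delta (s s1 : S) : stepDist P θ (deltaDist s) s1 = qmat P θ s s1 := by
  rw [stepDist_apply]
  unfold deltaDist
  simp [ite_mul, Finset.sum_ite_eq']

lemma stepDist_nonneg (hP : stochMat P) (hθ : feasible θ) {μ : S → ℝ} (hμ : ∀ s, 0 ≤ μ s)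
    (s1 : S) : 0 ≤ stepDist P θ μ s1 :=
  Finset.sum_nonneg fun s _ => Finset.sum_nonneg fun a _ =>
    mul_nonneg (mul_nonneg (hμ s) (jointPi_nonneg hθ s a)) ((hP s a).1 s1)

lemma sum_stepDist (hP : stochMat P) (hθ : feasible θ) (μ : S → ℝ) :
    ∑ s1, stepDist P θ μ s1 = ∑ s, μ s := by
  have : ∀ s1, stepDist P θ μ s1 = ∑ s0, μ s0 * qmat P θ s0 s1 := stepDist_apply μ
  rw [Finset.sum_congr rfl fun s1 _ => this s1, Finset.sum_comm]
  refine Finset.sum_congr rfl fun s0 _ => ?_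
  rw [← Finset.mul_sum, sum_qmat hP hθ, mul_one]

lemma visit_zero (μ : S → ℝ) : visit P θ 0 μ = μ := rfl

lemma visit_succ (t : ℕ) (μ : S → ℝ) :
    visit P θ (t+1) μ = visit P θ t (stepDist P θ μ) :=
  Function.iterate_succ_apply _ _ _

lemma visit_succ' (t : ℕ) (μ : S → ℝ) :
    visit P θ (t+1) μ = stepDist P θ (visit P θ t μ) :=
  Function.iterate_succ_apply' _ _ _

lemma visit_nonneg (hP : stochMat P) (hθ : feasible θ) {μ : S → ℝ} (hμ : ∀ s, 0 ≤ μ s) :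
    ∀ t s', 0 ≤ visit P θ t μ s' := by
  intro t
  induction t with
  | zero => exact hμ
  | succ t ih =>
    intro s'
    rw [visit_succ']
    exact stepDist_nonneg hP hθ ih s'

lemma sum_visit (hP : stochMat P) (hθ : feasible θ) (t : ℕ) (μ : S → ℝ) :
    ∑ s', visit P θ t μ s' = ∑ s, μ s := by
  induction t with
  | zero => rfl
  | succ t ih => rw [visit_succ', sum_stepDist hP hθ, ih]

lemma visit_le_one (hP : stochMat P) (hθ : feasible θ) {μ : S → ℝ} (hμ : ∀ s, 0 ≤ μ s)
    (hμ1 : ∑ s, μ s = 1) (t : ℕ) (s' : S) : visit P θ t μ s' ≤ 1 := by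
  have h := sum_visit hP hθ (θ := θ) t μ
  calc visit P θ t μ s' ≤ ∑ s'', visit P θ t μ s'' :=
        Finset.single_le_sum (fun s _ => visit_nonneg hP hθ hμ t s) (mem_univ s')
    _ = 1 := by rw [h, hμ1]

lemma visit_linear (t : ℕ) (μ : S → ℝ) (s' : S) :
    visit P θ t μ s' = ∑ s0, μ s0 * visit P θ t (deltaDist s0) s' := by
  induction t generalizing μ with
  | zero =>
    simp only [visit_zero, deltaDist]
    rw [Finset.sum_congr rfl (fun s0 (_ : s0 ∈ univ) => by
      rw [mul_ite, mul_one, mul_zero])]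
    rw [Finset.sum_ite_eq univ s' μ]
    simp
  | succ t ih =>
    have hR : ∀ s0, visit P θ (t+1) (deltaDist s0) s' =
        ∑ s1, qmat P θ s0 s1 * visit P θ t (deltaDist s1) s' := by
      intro s0
      rw [visit_succ, ih (stepDist P θ (deltaDist s0))]
      exact Finset.sum_congr rfl fun s1 _ => by rw [stepDist_delta]
    rw [visit_succ, ih (stepDist P θ μ)]
    have key : ∑ s0, stepDist P θ μ s0 * visit P θ t (deltaDist s0) s'
        = ∑ s2, μ s2 * ∑ s0, qmat P θ s2 s0 * visit P θ t (deltaDist s0) s' := by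
      have e1 : ∀ s0 : S, stepDist P θ μ s0 * visit P θ t (deltaDist s0) s'
          = ∑ s2, μ s2 * qmat P θ s2 s0 * visit P θ t (deltaDist s0) s' := by
        intro s0; rw [stepDist_apply, Finset.sum_mul]
      rw [Finset.sum_congr rfl fun s0 _ => e1 s0, Finset.sum_comm]
      refine Finset.sum_congr rfl fun s2 _ => ?_
      rw [Finset.mul_sum]
      exact Finset.sum_congr rfl fun s0 _ => by ring
    rw [key]
    exact Finset.sum_congr rfl fun s2 _ => by rw [hR s2]

lemma summable_geom_bound (hγ0 : 0 ≤ γ) (hγ1 : γ < 1) (u : ℕ → ℝ) (C : ℝ)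
    (h : ∀ t, |u t| ≤ γ^t * C) : Summable u := by
  have hg : Summable (fun t => γ^t * C) := (summable_geometric_of_lt_one hγ0 hγ1).mul_right C
  exact Summable.of_abs (hg.of_nonneg_of_le (fun t => abs_nonneg _) h)

lemma abs_sum_visit_le (hP : stochMat P) (hθ : feasible θ) {μ : S → ℝ} (hμ : ∀ s, 0 ≤ μ s)
    (hμ1 : ∑ s, μ s = 1) {c : S → ℝ} {C : ℝ} (hC : ∀ s, |c s| ≤ C) (t : ℕ) :
    |∑ s', visit P θ t μ s' * c s'| ≤ C := by
  calc |∑ s', visit P θ t μ s' * c s'| ≤ ∑ s', |visit P θ t μ s' * c s'| :=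
        Finset.abs_sum_le_sum_abs _ _
    _ ≤ ∑ s', visit P θ t μ s' * C := by
        refine Finset.sum_le_sum fun s' _ => ?_
        rw [abs_mul, abs_of_nonneg (visit_nonneg hP hθ hμ t s')]
        exact mul_le_mul_of_nonneg_left (hC s') (visit_nonneg hP hθ hμ t s')
    _ = (∑ s', visit P θ t μ s') * C := (Finset.sum_mul _ _ _).symm
    _ = C := by rw [sum_visit hP hθ, hμ1, one_mul]

/-- Generalized value function for an arbitrary per-state payoff `c`. -/
noncomputable def Vgen (P : S → (∀ i, A i) → S → ℝ) (θ : ∀ i, S → A i → ℝ) (γ : ℝ)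
    (c : S → ℝ) (s : S) : ℝ :=
  ∑' t : ℕ, γ ^ t * ∑ s', visit P θ t (deltaDist s) s' * c s'

lemma Vval_eq_Vgen (f : S → (∀ i, A i) → ℝ) : Vval P θ γ f = Vgen P θ γ (expRew f θ) := rfl

lemma deltaDist_nonneg (s s' : S) : 0 ≤ deltaDist s s' := by
  unfold deltaDist; split <;> norm_num

lemma sum_deltaDist (s : S) : ∑ s', deltaDist s s' = 1 := by
  unfold deltaDist; simp

lemma exists_abs_bound (c : S → ℝ) : ∃ C : ℝ, ∀ s, |c s| ≤ C := Finite.exists_le _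

lemma summable_vgen_term (hP : stochMat P) (hθ : feasible θ) (hγ0 : 0 ≤ γ) (hγ1 : γ < 1)
    {μ : S → ℝ} (hμ : ∀ s, 0 ≤ μ s) (hμ1 : ∑ s, μ s = 1) {c : S → ℝ} {C : ℝ}
    (hC : ∀ s, |c s| ≤ C) :
    Summable (fun t => γ ^ t * ∑ s', visit P θ t μ s' * c s') := by
  refine summable_geom_bound hγ0 hγ1 _ C fun t => ?_
  rw [abs_mul, abs_pow, abs_of_nonneg hγ0]
  exact mul_le_mul_of_nonneg_left (abs_sum_visit_le hP hθ hμ hμ1 hC t)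
    (pow_nonneg hγ0 t)

lemma Vgen_bellman (hP : stochMat P) (hθ : feasible θ) (hγ0 : 0 ≤ γ) (hγ1 : γ < 1)
    (c : S → ℝ) (s : S) :
    Vgen P θ γ c s = c s + γ * ∑ s1, qmat P θ s s1 * Vgen P θ γ c s1 := by
  obtain ⟨C, hC⟩ := exists_abs_bound c
  have hsum : ∀ s0 : S, Summable
      (fun t => γ ^ t * ∑ s', visit P θ t (deltaDist s0) s' * c s') := fun s0 =>
    summable_vgen_term hP hθ hγ0 hγ1 (deltaDist_nonneg s0) (sum_deltaDist s0) hC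
  have h0 : γ ^ 0 * ∑ s', visit P θ 0 (deltaDist s) s' * c s' = c s := by
    simp only [pow_zero, one_mul, visit_zero, deltaDist]
    simp [ite_mul]
  have hW : ∀ t, ∑ s', visit P θ (t+1) (deltaDist s) s' * c s'
      = ∑ s1, qmat P θ s s1 * ∑ s', visit P θ t (deltaDist s1) s' * c s' := by
    intro t
    have e1 : ∀ s' : S, visit P θ (t+1) (deltaDist s) s'
        = ∑ s1, qmat P θ s s1 * visit P θ t (deltaDist s1) s' := by
      intro s'
      rw [visit_succ, visit_linear]
      exact Finset.sum_congr rfl fun s1 _ => by rw [stepDist_delta]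
    rw [Finset.sum_congr rfl fun s' _ => by rw [e1 s', Finset.sum_mul]]
    rw [Finset.sum_comm]
    refine Finset.sum_congr rfl fun s1 _ => ?_
    rw [Finset.mul_sum]
    exact Finset.sum_congr rfl fun s' _ => by ring
  have key : ∀ t : ℕ, γ ^ (t+1) * ∑ s', visit P θ (t+1) (deltaDist s) s' * c s'
      = γ * ∑ s1, qmat P θ s s1 * (γ ^ t * ∑ s', visit P θ t (deltaDist s1) s' * c s') := by
    intro t
    rw [hW t, pow_succ, Finset.mul_sum, Finset.mul_sum]
    exact Finset.sum_congr rfl fun s1 _ => by ring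
  calc Vgen P θ γ c s
      = γ ^ 0 * ∑ s', visit P θ 0 (deltaDist s) s' * c s'
        + ∑' t : ℕ, γ ^ (t+1) * ∑ s', visit P θ (t+1) (deltaDist s) s' * c s' :=
        Summable.tsum_eq_zero_add (hsum s)
    _ = c s + ∑' t : ℕ, γ * ∑ s1, qmat P θ s s1 *
          (γ ^ t * ∑ s', visit P θ t (deltaDist s1) s' * c s') := by
        rw [h0, tsum_congr key]
    _ = c s + γ * ∑ s1, qmat P θ s s1 * Vgen P θ γ c s1 := by
        rw [tsum_mul_left]
        congr 1
        congr 1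
        rw [Summable.tsum_finsetSum (fun s1 _ => ((hsum s1).mul_left (qmat P θ s s1)))]
        exact Finset.sum_congr rfl fun s1 _ => tsum_mul_left

lemma fixed_point_unique (hP : stochMat P) (hθ : feasible θ) (hγ0 : 0 ≤ γ) (hγ1 : γ < 1)
    {c D E : S → ℝ}
    (hD : ∀ s, D s = c s + γ * ∑ s1, qmat P θ s s1 * D s1)
    (hE : ∀ s, E s = c s + γ * ∑ s1, qmat P θ s s1 * E s1) : ∀ s, D s = E s := by
  intro s
  have hne : Nonempty S := ⟨s⟩
  set F : S → ℝ := fun s => D s - E s with hFdef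
  have hFe : ∀ s, F s = γ * ∑ s1, qmat P θ s s1 * F s1 := by
    intro s
    have e : ∑ s1, qmat P θ s s1 * F s1
        = ∑ s1, qmat P θ s s1 * D s1 - ∑ s1, qmat P θ s s1 * E s1 := by
      rw [← Finset.sum_sub_distrib]
      exact Finset.sum_congr rfl fun s1 _ => by simp only [hFdef]; ring
    simp only [hFdef]
    rw [hD s, hE s, e]; ring
  obtain ⟨s0, hs0⟩ := Finite.exists_max (fun s => |F s|)
  have h1 : |F s0| ≤ γ * |F s0| := by
    calc |F s0| = γ * |∑ s1, qmat P θ s0 s1 * F s1| := by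
          rw [hFe s0, abs_mul, abs_of_nonneg hγ0]
      _ ≤ γ * ∑ s1, qmat P θ s0 s1 * |F s0| := by
          refine mul_le_mul_of_nonneg_left ?_ hγ0
          calc |∑ s1, qmat P θ s0 s1 * F s1| ≤ ∑ s1, |qmat P θ s0 s1 * F s1| :=
                Finset.abs_sum_le_sum_abs _ _
            _ ≤ ∑ s1, qmat P θ s0 s1 * |F s0| := by
                refine Finset.sum_le_sum fun s1 _ => ?_
                rw [abs_mul, abs_of_nonneg (qmat_nonneg hP hθ s0 s1)]
                exact mul_le_mul_of_nonneg_left (hs0 s1) (qmat_nonneg hP hθ s0 s1)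
      _ = γ * |F s0| := by rw [← Finset.sum_mul, sum_qmat hP hθ, one_mul]
  have h2 : |F s0| = 0 := by nlinarith [abs_nonneg (F s0)]
  have h3 : |F s| ≤ 0 := h2 ▸ hs0 s
  have h4 : F s = 0 := abs_nonpos_iff.mp h3
  simpa only [hFdef, sub_eq_zero] using h4

lemma sum_rho_Vgen (hP : stochMat P) (hγ0 : 0 ≤ γ) (hγ1 : γ < 1) (hρ : initDist ρ)
    (hθ' : feasible θ') (c : S → ℝ) :
    ∑ s, ρ s * Vgen P θ' γ c s = (1/(1-γ)) * ∑ s', dvisit P θ' γ ρ s' * c s' := by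
  obtain ⟨C, hC⟩ := exists_abs_bound c
  have h1γ : (0:ℝ) < 1 - γ := by linarith
  have hsum : ∀ s0 : S, Summable
      (fun t => γ ^ t * ∑ s', visit P θ' t (deltaDist s0) s' * c s') := fun s0 =>
    summable_vgen_term hP hθ' hγ0 hγ1 (deltaDist_nonneg s0) (sum_deltaDist s0) hC
  have hv1 : ∀ t s', |visit P θ' t ρ s' * c s'| ≤ |c s'| := by
    intro t s'
    rw [abs_mul]
    have h1 : |visit P θ' t ρ s'| ≤ 1 := by
      rw [abs_of_nonneg (visit_nonneg hP hθ' hρ.1 t s')]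
      exact visit_le_one hP hθ' hρ.1 hρ.2 t s'
    calc |visit P θ' t ρ s'| * |c s'| ≤ 1 * |c s'| :=
          mul_le_mul_of_nonneg_right h1 (abs_nonneg _)
      _ = |c s'| := one_mul _
  have hsum2 : ∀ s' : S, Summable (fun t => γ ^ t * (visit P θ' t ρ s' * c s')) := by
    intro s'
    refine summable_geom_bound hγ0 hγ1 _ |c s'| fun t => ?_
    rw [abs_mul, abs_pow, abs_of_nonneg hγ0]
    refine mul_le_mul_of_nonneg_left ?_ (pow_nonneg hγ0 t)
    exact hv1 t s'
  have hsum3 : ∀ s' : S, Summable (fun t => γ ^ t * visit P θ' t ρ s') := by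
    intro s'
    refine summable_geom_bound hγ0 hγ1 _ 1 fun t => ?_
    rw [abs_mul, abs_pow, abs_of_nonneg hγ0]
    refine mul_le_mul_of_nonneg_left ?_ (pow_nonneg hγ0 t)
    rw [abs_of_nonneg (visit_nonneg hP hθ' hρ.1 t s')]
    exact visit_le_one hP hθ' hρ.1 hρ.2 t s'
  calc ∑ s, ρ s * Vgen P θ' γ c s
      = ∑ s, ∑' t : ℕ, ρ s * (γ ^ t * ∑ s', visit P θ' t (deltaDist s) s' * c s') := by
        exact Finset.sum_congr rfl fun s _ => tsum_mul_left.symm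
    _ = ∑' t : ℕ, ∑ s, ρ s * (γ ^ t * ∑ s', visit P θ' t (deltaDist s) s' * c s') :=
        (Summable.tsum_finsetSum (fun s _ => (hsum s).mul_left (ρ s))).symm
    _ = ∑' t : ℕ, ∑ s', γ ^ t * (visit P θ' t ρ s' * c s') := by
        refine tsum_congr fun t => ?_
        have e1 : ∀ s : S, ρ s * (γ ^ t * ∑ s', visit P θ' t (deltaDist s) s' * c s')
            = ∑ s', γ ^ t * (ρ s * visit P θ' t (deltaDist s) s' * c s') := by
          intro s
          rw [Finset.mul_sum, Finset.mul_sum]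
          exact Finset.sum_congr rfl fun s' _ => by ring
        rw [Finset.sum_congr rfl fun s _ => e1 s, Finset.sum_comm]
        refine Finset.sum_congr rfl fun s' _ => ?_
        rw [visit_linear (θ := θ') t ρ s', Finset.sum_mul, Finset.mul_sum]
    _ = ∑ s', ∑' t : ℕ, γ ^ t * (visit P θ' t ρ s' * c s') :=
        Summable.tsum_finsetSum (fun s' _ => hsum2 s')
    _ = ∑ s', (∑' t : ℕ, γ ^ t * visit P θ' t ρ s') * c s' := by
        refine Finset.sum_congr rfl fun s' _ => ?_
        rw [← tsum_mul_right]
        exact tsum_congr fun t => by ring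
    _ = (1/(1-γ)) * ∑ s', dvisit P θ' γ ρ s' * c s' := by
        rw [Finset.mul_sum]
        refine Finset.sum_congr rfl fun s' _ => ?_
        unfold dvisit
        field_simp

lemma sum_jointPi_Qval (f : S → (∀ i, A i) → ℝ) (s : S) :
    ∑ a, jointPi θ' s a * Qval P θ γ f s a
      = expRew f θ' s + γ * ∑ s1, qmat P θ' s s1 * Vval P θ γ f s1 := by
  unfold Qval
  have e1 : ∀ a : ∀ i, A i,
      jointPi θ' s a * (f s a + γ * ∑ s1, P s a s1 * Vval P θ γ f s1)
        = jointPi θ' s a * f s a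
          + ∑ s1, γ * (jointPi θ' s a * P s a s1 * Vval P θ γ f s1) := by
    intro a
    rw [mul_add]
    congr 1
    rw [Finset.mul_sum, Finset.mul_sum]
    exact Finset.sum_congr rfl fun s1 _ => by ring
  rw [Finset.sum_congr rfl fun a _ => e1 a, Finset.sum_add_distrib]
  congr 1
  rw [Finset.sum_comm, Finset.mul_sum]
  refine Finset.sum_congr rfl fun s1 _ => ?_
  unfold qmat
  rw [Finset.sum_mul, Finset.mul_sum]

lemma vval_bellman (hP : stochMat P) (hθ : feasible θ) (hγ0 : 0 ≤ γ) (hγ1 : γ < 1)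
    (f : S → (∀ i, A i) → ℝ) (s : S) :
    Vval P θ γ f s = expRew f θ s + γ * ∑ s1, qmat P θ s s1 * Vval P θ γ f s1 := by
  rw [Vval_eq_Vgen]
  exact Vgen_bellman hP hθ hγ0 hγ1 _ s

lemma sum_jointPi_Q_eq_V (hP : stochMat P) (hθ : feasible θ) (hγ0 : 0 ≤ γ) (hγ1 : γ < 1)
    (f : S → (∀ i, A i) → ℝ) (s : S) :
    ∑ a, jointPi θ s a * Qval P θ γ f s a = Vval P θ γ f s := by
  rw [sum_jointPi_Qval (θ' := θ), ← vval_bellman hP hθ hγ0 hγ1]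

lemma perf_diff (hP : stochMat P) (hγ0 : 0 ≤ γ) (hγ1 : γ < 1) (hρ : initDist ρ)
    (hθ : feasible θ) (hθ' : feasible θ') (f : S → (∀ i, A i) → ℝ) :
    Jval P θ' γ f ρ - Jval P θ γ f ρ
      = (1/(1-γ)) * ∑ s, dvisit P θ' γ ρ s *
          (∑ a, jointPi θ' s a * Qval P θ γ f s a - Vval P θ γ f s) := by
  set g : S → ℝ :=
    fun s => ∑ a, jointPi θ' s a * Qval P θ γ f s a - Vval P θ γ f s with hg
  have hD : ∀ s, (Vval P θ' γ f s - Vval P θ γ f s)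
      = g s + γ * ∑ s1, qmat P θ' s s1 * (Vval P θ' γ f s1 - Vval P θ γ f s1) := by
    intro s
    have hb' : Vval P θ' γ f s
        = expRew f θ' s + γ * ∑ s1, qmat P θ' s s1 * Vval P θ' γ f s1 :=
      vval_bellman hP hθ' hγ0 hγ1 f s
    have hgx : g s
        = expRew f θ' s + γ * ∑ s1, qmat P θ' s s1 * Vval P θ γ f s1
          - Vval P θ γ f s := by
      simp only [hg]; rw [sum_jointPi_Qval]
    have hsub : ∑ s1, qmat P θ' s s1 * (Vval P θ' γ f s1 - Vval P θ γ f s1)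
        = ∑ s1, qmat P θ' s s1 * Vval P θ' γ f s1
          - ∑ s1, qmat P θ' s s1 * Vval P θ γ f s1 := by
      rw [← Finset.sum_sub_distrib]
      exact Finset.sum_congr rfl fun s1 _ => by ring
    rw [hgx, hsub, hb']
    ring
  have hE : ∀ s, Vgen P θ' γ g s = g s + γ * ∑ s1, qmat P θ' s s1 * Vgen P θ' γ g s1 :=
    Vgen_bellman hP hθ' hγ0 hγ1 g
  have hDE : ∀ s, Vval P θ' γ f s - Vval P θ γ f s = Vgen P θ' γ g s :=
    fixed_point_unique hP hθ' hγ0 hγ1 hD hE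
  have hJ : Jval P θ' γ f ρ - Jval P θ γ f ρ = ∑ s, ρ s * Vgen P θ' γ g s := by
    unfold Jval
    rw [← Finset.sum_sub_distrib]
    exact Finset.sum_congr rfl fun s _ => by rw [← hDE s]; ring
  rw [hJ, sum_rho_Vgen hP hγ0 hγ1 hρ hθ' g]

lemma update_feasible (hθ : feasible θ) {i : Fin n} {θi' : S → A i → ℝ}
    (hθi' : feasibleAgent i θi') : feasible (Function.update θ i θi') := by
  intro j
  rcases eq_or_ne j i with rfl | hne
  · rwa [Function.update_self]
  · rw [Function.update_of_ne hne]; exact hθ j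

lemma jointPi_update (i : Fin n) (θi' : S → A i → ℝ) (s : S) (a : ∀ i, A i) :
    jointPi (Function.update θ i θi') s a
      = θi' s (a i) * ∏ j ∈ univ.erase i, θ j s (a j) := by
  unfold jointPi
  rw [← Finset.mul_prod_erase univ _ (mem_univ i)]
  congr 1
  · rw [Function.update_self]
  · refine Finset.prod_congr rfl fun j hj => ?_
    rw [Function.update_of_ne (Finset.ne_of_mem_erase hj)]

lemma sum_jointPi_update_mul (i : Fin n) (θi' : S → A i → ℝ) (s : S)
    (F : (∀ i, A i) → ℝ) :
    ∑ a, jointPi (Function.update θ i θi') s a * F a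
      = ∑ ai, θi' s ai *
          ∑ a, (if a i = ai then (∏ j ∈ univ.erase i, θ j s (a j)) * F a else 0) := by
  have e : ∀ a : ∀ i, A i, jointPi (Function.update θ i θi') s a * F a
      = ∑ ai, (if a i = ai then θi' s ai * ((∏ j ∈ univ.erase i, θ j s (a j)) * F a)
          else 0) := by
    intro a
    rw [Finset.sum_ite_eq univ (a i)]
    simp only [mem_univ, if_true]
    rw [jointPi_update]; ring
  rw [Finset.sum_congr rfl fun a _ => e a, Finset.sum_comm]
  refine Finset.sum_congr rfl fun ai _ => ?_
  rw [Finset.mul_sum]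
  refine Finset.sum_congr rfl fun a _ => ?_
  split
  · ring
  · rw [mul_zero]

lemma sum_update_Q_eq_Qbar (i : Fin n) (θi' : S → A i → ℝ) (s : S)
    (f : S → (∀ i, A i) → ℝ) :
    ∑ a, jointPi (Function.update θ i θi') s a * Qval P θ γ f s a
      = ∑ ai, θi' s ai * Qbar P θ γ f i s ai := by
  rw [sum_jointPi_update_mul]
  rfl

lemma sum_thetai_Abar (hP : stochMat P) (hθ : feasible θ) (hγ0 : 0 ≤ γ) (hγ1 : γ < 1)
    (i : Fin n) (s : S) (f : S → (∀ i, A i) → ℝ) :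
    ∑ ai, θ i s ai * Abar P θ γ f i s ai = 0 := by
  unfold Abar
  have h1 : ∑ ai, θ i s ai * Qbar P θ γ f i s ai = Vval P θ γ f s := by
    rw [← sum_update_Q_eq_Qbar (i := i) (θi' := θ i), Function.update_eq_self]
    exact sum_jointPi_Q_eq_V hP hθ hγ0 hγ1 f s
  calc ∑ ai, θ i s ai * (Qbar P θ γ f i s ai - Vval P θ γ f s)
      = ∑ ai, θ i s ai * Qbar P θ γ f i s ai
        - (∑ ai, θ i s ai) * Vval P θ γ f s := by
        rw [Finset.sum_mul, ← Finset.sum_sub_distrib]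
        exact Finset.sum_congr rfl fun ai _ => by ring
    _ = 0 := by rw [h1, (hθ i s).2, one_mul]; ring

lemma perf_diff_update (hP : stochMat P) (hγ0 : 0 ≤ γ) (hγ1 : γ < 1) (hρ : initDist ρ)
    (hθ : feasible θ) {i : Fin n} {θi' : S → A i → ℝ} (hθi' : feasibleAgent i θi')
    (f : S → (∀ i, A i) → ℝ) :
    Jval P (Function.update θ i θi') γ f ρ - Jval P θ γ f ρ
      = (1/(1-γ)) * ∑ s, dvisit P (Function.update θ i θi') γ ρ s *
          (∑ ai, θi' s ai * Abar P θ γ f i s ai) := by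
  rw [perf_diff hP hγ0 hγ1 hρ hθ (update_feasible hθ hθi') f]
  congr 1
  refine Finset.sum_congr rfl fun s _ => ?_
  congr 1
  rw [sum_update_Q_eq_Qbar]
  unfold Abar
  have e : ∑ ai, θi' s ai * (Qbar P θ γ f i s ai - Vval P θ γ f s)
      = ∑ ai, θi' s ai * Qbar P θ γ f i s ai
        - (∑ ai, θi' s ai) * Vval P θ γ f s := by
    rw [Finset.sum_mul, ← Finset.sum_sub_distrib]
    exact Finset.sum_congr rfl fun ai _ => by ring
  rw [e, (hθi' s).2, one_mul]

lemma exists_pos_lb {α : Type*} [Finite α] (F : α → ℝ) (h : ∀ x, 0 < F x) :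
    ∃ d : ℝ, 0 < d ∧ ∀ x, d ≤ F x := by
  rcases isEmpty_or_nonempty α with he | hne
  · exact ⟨1, one_pos, fun x => (he.false x).elim⟩
  · obtain ⟨x0, hx0⟩ := Finite.exists_min F
    exact ⟨F x0, h x0, hx0⟩

variable {r : Fin n → S → (∀ i, A i) → ℝ} {φ : S → (∀ i, A i) → ℝ}

lemma potential_J (hpot : isPotential P γ r φ) (hθ : feasible θ) {i : Fin n}
    {θi' : S → A i → ℝ} (hθi' : feasibleAgent i θi') (hρ : initDist ρ) :
    Jval P (Function.update θ i θi') γ (r i) ρ - Jval P θ γ (r i) ρ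
      = Jval P (Function.update θ i θi') γ φ ρ - Jval P θ γ φ ρ := by
  unfold Jval
  rw [← Finset.sum_sub_distrib, ← Finset.sum_sub_distrib]
  refine Finset.sum_congr rfl fun s _ => ?_
  have h := hpot θ hθ i θi' hθi' s
  calc ρ s * Vval P (Function.update θ i θi') γ (r i) s - ρ s * Vval P θ γ (r i) s
      = ρ s * (Vval P (Function.update θ i θi') γ (r i) s - Vval P θ γ (r i) s) := by ring
    _ = ρ s * (Vval P (Function.update θ i θi') γ φ s - Vval P θ γ φ s) := by rw [h]
    _ = ρ s * Vval P (Function.update θ i θi') γ φ s - ρ s * Vval P θ γ φ s := by ring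

lemma unilateral_single_state (hP : stochMat P) (hγ0 : 0 ≤ γ) (hγ1 : γ < 1)
    (hρ : initDist ρ) (hθ : feasible θ) {i : Fin n} {θi' : S → A i → ℝ}
    (hθi' : feasibleAgent i θi') {s : S} (hother : ∀ s', s' ≠ s → θi' s' = θ i s') :
    Jval P (Function.update θ i θi') γ φ ρ - Jval P θ γ φ ρ
      = (1/(1-γ)) * (dvisit P (Function.update θ i θi') γ ρ s *
          ∑ ai, θi' s ai * Abar P θ γ φ i s ai) := by
  rw [perf_diff_update hP hγ0 hγ1 hρ hθ hθi' φ]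
  congr 1
  rw [Fintype.sum_eq_single s]
  intro s' hs'
  rw [hother s' hs', sum_thetai_Abar hP hθ hγ0 hγ1, mul_zero]

lemma sum_thetai_Qbar_eq_V (hP : stochMat P) (hθ : feasible θ) (hγ0 : 0 ≤ γ)
    (hγ1 : γ < 1) (i : Fin n) (s : S) (f : S → (∀ i, A i) → ℝ) :
    ∑ ai, θ i s ai * Qbar P θ γ f i s ai = Vval P θ γ f s := by
  rw [← sum_update_Q_eq_Qbar (i := i) (θi' := θ i), Function.update_eq_self]
  exact sum_jointPi_Q_eq_V hP hθ hγ0 hγ1 f s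

/-- In a strict NE of a potential game, each agent's policy is pure. -/
lemma strictNE_pure (hP : stochMat P) (hγ0 : 0 ≤ γ) (hγ1 : γ < 1) (hρ : initDist ρ)
    (hpot : isPotential P γ r φ)
    (hd : ∀ θ' : ∀ i, S → A i → ℝ, feasible θ' → ∀ s, 0 < dvisit P θ' γ ρ s)
    (hNE : strictNE P γ r ρ θ) (i : Fin n) (s : S) :
    ∃ a0, ∀ ai, θ i s ai = if ai = a0 then 1 else 0 := by
  have hθ := hNE.1
  by_contra hcon
  push_neg at hcon
  have hAne : Nonempty (A i) := by
    by_contra hA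
    have : (univ : Finset (A i)) = ∅ := by
      rw [Finset.univ_eq_empty_iff]; exact not_nonempty_iff.mp hA
    have h2 := (hθ i s).2
    rw [this, Finset.sum_empty] at h2
    norm_num at h2
  obtain ⟨ai, hai⟩ := Finite.exists_max (fun ai => Qbar P θ γ φ i s ai)
  set θi' : S → A i → ℝ :=
    fun s' a => if s' = s then (if a = ai then 1 else 0) else θ i s' a with hθidef
  have hfeas : feasibleAgent i θi' := by
    intro s'
    rcases eq_or_ne s' s with rfl | hne
    · constructor
      · intro a; simp only [hθidef, if_pos rfl]; split <;> norm_num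
      · simp [hθidef]
    · constructor
      · intro a; simp only [hθidef, if_neg hne]; exact (hθ i s').1 a
      · simp only [hθidef, if_neg hne]; exact (hθ i s').2
  have hne : θi' ≠ θ i := by
    intro heq
    obtain ⟨ai', hai'⟩ := hcon ai
    have := congrFun (congrFun heq s) ai'
    simp only [hθidef, if_pos rfl] at this
    exact hai' this.symm
  have hJ := hNE.2 i θi' hfeas hne
  have hJφ : Jval P (Function.update θ i θi') γ φ ρ - Jval P θ γ φ ρ < 0 := by
    have := potential_J hpot hθ hfeas hρ
    linarith
  have hother : ∀ s', s' ≠ s → θi' s' = θ i s' := by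
    intro s' hs'; funext a; simp only [hθidef, if_neg hs']
  rw [unilateral_single_state hP hγ0 hγ1 hρ hθ hfeas hother] at hJφ
  have hinner : ∑ ai', θi' s ai' * Abar P θ γ φ i s ai' = Abar P θ γ φ i s ai := by
    rw [Fintype.sum_eq_single ai]
    · simp [hθidef]
    · intro ai' hai'
      simp only [hθidef, if_pos rfl, if_neg hai', zero_mul]
  rw [hinner] at hJφ
  have hA0 : 0 ≤ Abar P θ γ φ i s ai := by
    unfold Abar
    rw [← sum_thetai_Qbar_eq_V hP hθ hγ0 hγ1 i s φ]
    have : ∑ ai', θ i s ai' * Qbar P θ γ φ i s ai'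
        ≤ ∑ ai', θ i s ai' * Qbar P θ γ φ i s ai := by
      refine Finset.sum_le_sum fun ai' _ => ?_
      exact mul_le_mul_of_nonneg_left (hai ai') ((hθ i s).1 ai')
    rw [← Finset.sum_mul, (hθ i s).2, one_mul] at this
    linarith
  have hd0 : 0 < dvisit P (Function.update θ i θi') γ ρ s :=
    hd _ (update_feasible hθ hfeas) s
  have h1γ : (0:ℝ) < 1/(1-γ) := by
    have : (0:ℝ) < 1 - γ := by linarith
    positivity
  have hnn : 0 ≤ 1/(1-γ) * (dvisit P (Function.update θ i θi') γ ρ s * Abar P θ γ φ i s ai) :=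
    mul_nonneg h1γ.le (mul_nonneg hd0.le hA0)
  linarith

lemma single_state_dev (hP : stochMat P) (hγ0 : 0 ≤ γ) (hγ1 : γ < 1) (hρ : initDist ρ)
    (hθ : feasible θ) (i : Fin n) (s : S) (w : A i → ℝ)
    (hw0 : ∀ a, 0 ≤ w a) (hw1 : ∑ a, w a = 1) :
    ∃ θi' : S → A i → ℝ, feasibleAgent i θi' ∧ θi' s = w ∧
      (∀ s', s' ≠ s → θi' s' = θ i s') ∧
      Jval P (Function.update θ i θi') γ φ ρ - Jval P θ γ φ ρ
        = (1/(1-γ)) * (dvisit P (Function.update θ i θi') γ ρ s *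
            ∑ ai, w ai * Abar P θ γ φ i s ai) := by
  set θi' : S → A i → ℝ := fun s' a => if s' = s then w a else θ i s' a with hdef
  have hfeas : feasibleAgent i θi' := by
    intro s'
    rcases eq_or_ne s' s with rfl | hne
    · exact ⟨fun a => by simpa [hdef] using hw0 a, by simpa [hdef] using hw1⟩
    · exact ⟨fun a => by simpa [hdef, hne] using (hθ i s').1 a,
        by simpa [hdef, hne] using (hθ i s').2⟩
  have hs : θi' s = w := by funext a; simp [hdef]
  have hother : ∀ s', s' ≠ s → θi' s' = θ i s' := by
    intro s' h; funext a; simp [hdef, h]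
  refine ⟨θi', hfeas, hs, hother, ?_⟩
  rw [unilateral_single_state hP hγ0 hγ1 hρ hθ hfeas hother, hs]

lemma strictNE_Abar_neg (hP : stochMat P) (hγ0 : 0 ≤ γ) (hγ1 : γ < 1) (hρ : initDist ρ)
    (hpot : isPotential P γ r φ)
    (hd : ∀ θ' : ∀ i, S → A i → ℝ, feasible θ' → ∀ s, 0 < dvisit P θ' γ ρ s)
    (hNE : strictNE P γ r ρ θ)
    (astar : ∀ j, S → A j) (hpure : ∀ j s ai, θ j s ai = if ai = astar j s then 1 else 0)
    (i : Fin n) (s : S) (ai : A i) (hai : ai ≠ astar i s) :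
    Abar P θ γ φ i s ai < 0 := by
  have hθ := hNE.1
  obtain ⟨θi', hfeas, hs, hother, heqJ⟩ := single_state_dev (φ := φ) hP hγ0 hγ1 hρ hθ i s
    (fun a => if a = ai then 1 else 0)
    (fun a => by by_cases hh : a = ai <;> simp [hh]) (by simp)
  have hne : θi' ≠ θ i := by
    intro h
    have h1 : θi' s ai = 1 := by rw [hs]; simp
    rw [h, hpure i s ai, if_neg hai] at h1
    norm_num at h1
  have hJ := hNE.2 i θi' hfeas hne
  have hJφ : Jval P (Function.update θ i θi') γ φ ρ - Jval P θ γ φ ρ < 0 := by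
    have := potential_J hpot hθ hfeas hρ
    linarith
  rw [heqJ] at hJφ
  have hinner : ∑ ai', (if ai' = ai then (1:ℝ) else 0) * Abar P θ γ φ i s ai'
      = Abar P θ γ φ i s ai := by
    rw [Fintype.sum_eq_single ai]
    · simp
    · intro ai' h; rw [if_neg h, zero_mul]
  rw [hinner] at hJφ
  have hd0 := hd _ (update_feasible hθ hfeas) s
  have h1γ : (0:ℝ) < 1/(1-γ) := by
    have : (0:ℝ) < 1 - γ := by linarith
    positivity
  by_contra hcon
  push_neg at hcon
  have : 0 ≤ 1/(1-γ) * (dvisit P (Function.update θ i θi') γ ρ s * Abar P θ γ φ i s ai) :=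
    mul_nonneg h1γ.le (mul_nonneg hd0.le hcon)
  linarith

lemma localmax_Abar_neg (hP : stochMat P) (hγ0 : 0 ≤ γ) (hγ1 : γ < 1) (hρ : initDist ρ)
    (hθ : feasible θ) {δ : ℝ} (hδ : 0 < δ)
    (hloc : ∀ θ2 : ∀ i, S → A i → ℝ, feasible θ2 → θ2 ≠ θ →
      Real.sqrt (polNormSq θ2 θ) ≤ δ → Jval P θ2 γ φ ρ < Jval P θ γ φ ρ)
    (hd : ∀ θ' : ∀ i, S → A i → ℝ, feasible θ' → ∀ s, 0 < dvisit P θ' γ ρ s)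
    (i : Fin n) (s : S) (ai : A i)
    (hne : θ i s ≠ fun a => if a = ai then (1:ℝ) else 0) :
    Abar P θ γ φ i s ai < 0 := by
  set e : A i → ℝ := fun a => if a = ai then 1 else 0 with he
  set c : ℝ := ∑ a, (e a - θ i s a)^2 with hc
  have hc0 : 0 ≤ c := Finset.sum_nonneg fun a _ => sq_nonneg _
  have hsc0 : 0 ≤ Real.sqrt c := Real.sqrt_nonneg c
  set lam : ℝ := min 1 (δ / (Real.sqrt c + 1)) with hlam
  have hlam0 : 0 < lam := by
    apply lt_min one_pos
    positivity
  have hlam1 : lam ≤ 1 := min_le_left _ _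
  set w : A i → ℝ := fun a => (1 - lam) * θ i s a + lam * e a with hw
  have hw0 : ∀ a, 0 ≤ w a := by
    intro a
    have h1 := (hθ i s).1 a
    have h2 : (0:ℝ) ≤ e a := by simp only [he]; split <;> norm_num
    simp only [hw]
    nlinarith
  have hw1 : ∑ a, w a = 1 := by
    simp only [hw]
    rw [Finset.sum_add_distrib, ← Finset.mul_sum, ← Finset.mul_sum, (hθ i s).2]
    simp only [he]
    rw [Finset.sum_ite_eq' univ ai (fun _ => (1:ℝ))]
    simp
  obtain ⟨θi', hfeas, hs, hother, heqJ⟩ :=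
    single_state_dev (φ := φ) hP hγ0 hγ1 hρ hθ i s w hw0 hw1
  have hθ2feas : feasible (Function.update θ i θi') := update_feasible hθ hfeas
  have hθ2ne : Function.update θ i θi' ≠ θ := by
    intro h
    have h1 : θi' s = θ i s := by
      have h0 := congrFun h i
      rw [Function.update_self] at h0
      exact congrFun h0 s
    apply hne
    funext a
    have h5 : lam * (e a - θ i s a) = w a - θ i s a := by simp only [hw]; ring
    have h2 : w a = θ i s a := by rw [← hs, h1]
    rw [h2, sub_self] at h5
    rcases mul_eq_zero.mp h5 with h | h
    · exact absurd h (ne_of_gt hlam0)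
    · exact (sub_eq_zero.mp h).symm
  have hdist : Real.sqrt (polNormSq (Function.update θ i θi') θ) ≤ δ := by
    have hps : polNormSq (Function.update θ i θi') θ = lam^2 * c := by
      unfold polNormSq
      rw [Fintype.sum_eq_single i]
      · rw [Fintype.sum_eq_single s]
        · rw [hc, Finset.mul_sum]
          refine Finset.sum_congr rfl fun a _ => ?_
          have hup : Function.update θ i θi' i s a = w a := by
            rw [Function.update_self, hs]
          rw [hup]
          simp only [hw]; ring
        · intro s' hs'
          have hup : Function.update θ i θi' i s' = θ i s' := by
            rw [Function.update_self]; exact hother s' hs'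
          rw [hup]
          simp
      · intro j hj
        rw [Function.update_of_ne hj]
        simp
    rw [hps, Real.sqrt_mul (sq_nonneg lam), Real.sqrt_sq hlam0.le]
    have h6 : lam ≤ δ / (Real.sqrt c + 1) := min_le_right _ _
    have h7 : lam * Real.sqrt c ≤ (δ / (Real.sqrt c + 1)) * Real.sqrt c :=
      mul_le_mul_of_nonneg_right h6 hsc0
    have h8 : (δ / (Real.sqrt c + 1)) * Real.sqrt c ≤ δ := by
      rw [div_mul_eq_mul_div, div_le_iff₀ (by positivity)]
      nlinarith
    linarith
  have hJφ := hloc _ hθ2feas hθ2ne hdist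
  have hJφ' : (1/(1-γ)) * (dvisit P (Function.update θ i θi') γ ρ s *
      ∑ ai', w ai' * Abar P θ γ φ i s ai') < 0 := by
    rw [← heqJ]; linarith
  have hinner : ∑ ai', w ai' * Abar P θ γ φ i s ai'
      = lam * Abar P θ γ φ i s ai := by
    have hterm : ∀ ai', w ai' * Abar P θ γ φ i s ai'
        = (1-lam) * (θ i s ai' * Abar P θ γ φ i s ai')
          + lam * (e ai' * Abar P θ γ φ i s ai') := fun ai' => by
      simp only [hw]; ring
    rw [Finset.sum_congr rfl fun ai' _ => hterm ai', Finset.sum_add_distrib,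
      ← Finset.mul_sum, ← Finset.mul_sum,
      sum_thetai_Abar hP hθ hγ0 hγ1, mul_zero, zero_add]
    congr 1
    rw [Fintype.sum_eq_single ai]
    · simp [he]
    · intro ai' h; simp only [he]; rw [if_neg h, zero_mul]
  rw [hinner] at hJφ'
  have hd0 := hd _ hθ2feas s
  have h1γ : (0:ℝ) < 1/(1-γ) := by
    have : (0:ℝ) < 1 - γ := by linarith
    positivity
  by_contra hcon
  push_neg at hcon
  have : 0 ≤ 1/(1-γ) * (dvisit P (Function.update θ i θi') γ ρ s *
      (lam * Abar P θ γ φ i s ai)) :=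
    mul_nonneg h1γ.le (mul_nonneg hd0.le (mul_nonneg hlam0.le hcon))
  linarith

lemma localmax_Abar_nonpos (hP : stochMat P) (hγ0 : 0 ≤ γ) (hγ1 : γ < 1) (hρ : initDist ρ)
    (hθ : feasible θ) {δ : ℝ} (hδ : 0 < δ)
    (hloc : ∀ θ2 : ∀ i, S → A i → ℝ, feasible θ2 → θ2 ≠ θ →
      Real.sqrt (polNormSq θ2 θ) ≤ δ → Jval P θ2 γ φ ρ < Jval P θ γ φ ρ)
    (hd : ∀ θ' : ∀ i, S → A i → ℝ, feasible θ' → ∀ s, 0 < dvisit P θ' γ ρ s)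
    (i : Fin n) (s : S) (ai : A i) :
    Abar P θ γ φ i s ai ≤ 0 := by
  by_cases h : θ i s = fun a => if a = ai then (1:ℝ) else 0
  · have h0 := sum_thetai_Abar hP hθ hγ0 hγ1 i s φ
    simp only [h] at h0
    rw [Fintype.sum_eq_single ai (fun ai' hai' => by rw [if_neg hai', zero_mul])] at h0
    rw [if_pos rfl, one_mul] at h0
    exact le_of_eq h0
  · exact (localmax_Abar_neg hP hγ0 hγ1 hρ hθ hδ hloc hd i s ai h).le

lemma one_sub_sum_le_prod {ι : Type*} [DecidableEq ι] (T : Finset ι) (q : ι → ℝ)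
    (h0 : ∀ j ∈ T, 0 ≤ q j) (h1 : ∀ j ∈ T, q j ≤ 1) :
    1 - ∑ j ∈ T, (1 - q j) ≤ ∏ j ∈ T, q j := by
  induction T using Finset.induction_on with
  | empty => simp
  | @insert a T ha ih =>
    rw [Finset.prod_insert ha, Finset.sum_insert ha]
    have hS : 0 ≤ ∑ j ∈ T, (1 - q j) :=
      Finset.sum_nonneg fun j hj => by linarith [h1 j (Finset.mem_insert_of_mem hj)]
    have hih := ih (fun j hj => h0 j (Finset.mem_insert_of_mem hj))
      (fun j hj => h1 j (Finset.mem_insert_of_mem hj))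
    have hqa0 := h0 a (Finset.mem_insert_self a T)
    have hqa1 := h1 a (Finset.mem_insert_self a T)
    nlinarith [mul_le_mul_of_nonneg_left hih hqa0]

lemma sum_update_prod (E : ∀ j, A j → ℝ) (i : Fin n) (g : A i → ℝ) :
    ∑ a : ∀ j, A j, g (a i) * ∏ j ∈ univ.erase i, E j (a j)
      = (∑ x, g x) * ∏ j ∈ univ.erase i, (∑ x, E j x) := by
  have h1 : ∀ a : ∀ j, A j, g (a i) * ∏ j ∈ univ.erase i, E j (a j)
      = ∏ j, (Function.update E i g) j (a j) := by
    intro a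
    rw [← Finset.mul_prod_erase univ _ (mem_univ i), Function.update_self]
    congr 1
    exact (Finset.prod_congr rfl fun j hj => by
      rw [Function.update_of_ne (Finset.ne_of_mem_erase hj)]).symm
  rw [Finset.sum_congr rfl fun a _ => h1 a, sum_prod_pi,
    ← Finset.mul_prod_erase univ _ (mem_univ i), Function.update_self]
  congr 1
  exact Finset.prod_congr rfl fun j hj => by
    rw [Function.update_of_ne (Finset.ne_of_mem_erase hj)]

lemma filter_card_zero_eq (b : ∀ i, A i) :
    univ.filter (fun a : ∀ i, A i =>
        (univ.filter (fun i => a i ≠ b i)).card = 0) = {b} := by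
  ext a
  simp only [Finset.mem_filter, mem_univ, true_and, Finset.mem_singleton,
    Finset.card_eq_zero]
  constructor
  · intro h
    funext i
    by_contra hi
    have hmem : i ∈ univ.filter (fun i => a i ≠ b i) :=
      Finset.mem_filter.mpr ⟨mem_univ i, hi⟩
    rw [h] at hmem
    exact absurd hmem (Finset.notMem_empty i)
  · intro h; subst h; simp

lemma sum_split_card (b : ∀ i, A i) (f : (∀ i, A i) → ℝ) :
    ∑ a, f a
      = (∑ a ∈ univ.filter (fun a : ∀ i, A i =>
            (univ.filter (fun i => a i ≠ b i)).card = 0), f a)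
        + ((∑ a ∈ univ.filter (fun a : ∀ i, A i =>
            (univ.filter (fun i => a i ≠ b i)).card = 1), f a)
        + (∑ a ∈ univ.filter (fun a : ∀ i, A i =>
            2 ≤ (univ.filter (fun i => a i ≠ b i)).card), f a)) := by
  classical
  rw [← Finset.sum_filter_add_sum_filter_not univ
    (fun a : ∀ i, A i => (univ.filter (fun i => a i ≠ b i)).card = 0) f]
  congr 1
  rw [← Finset.sum_filter_add_sum_filter_not
    (univ.filter fun a : ∀ i, A i => ¬ (univ.filter (fun i => a i ≠ b i)).card = 0)
    (fun a : ∀ i, A i => (univ.filter (fun i => a i ≠ b i)).card = 1) f]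
  congr 1
  · rw [Finset.filter_filter]
    refine Finset.sum_congr ?_ fun _ _ => rfl
    ext a
    simp only [Finset.mem_filter, mem_univ, true_and]
    omega
  · rw [Finset.filter_filter]
    refine Finset.sum_congr ?_ fun _ _ => rfl
    ext a
    simp only [Finset.mem_filter, mem_univ, true_and]
    omega

lemma sum_card_one (p : ∀ i, A i → ℝ) (b : ∀ i, A i) (Adv : (∀ i, A i) → ℝ) :
    ∑ a ∈ univ.filter (fun a : ∀ i, A i =>
        (univ.filter (fun i => a i ≠ b i)).card = 1), (∏ j, p j (a j)) * Adv a
      = ∑ i, (∑ ai ∈ univ.erase (b i), p i ai * Adv (Function.update b i ai))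
          * ∏ j ∈ univ.erase i, p j (b j) := by
  classical
  set E : ∀ j, A j → ℝ := fun j x => if x = b j then p j x else 0 with hE
  set g : ∀ i, A i → ℝ :=
    fun i x => if x = b i then 0 else p i x * Adv (Function.update b i x) with hg
  have claim : ∀ a : ∀ i, A i,
      (if (univ.filter (fun i => a i ≠ b i)).card = 1
        then (∏ j, p j (a j)) * Adv a else 0)
      = ∑ i, g i (a i) * ∏ j ∈ univ.erase i, E j (a j) := by
    intro a
    by_cases hc : (univ.filter (fun i => a i ≠ b i)).card = 1
    · rw [if_pos hc]
      obtain ⟨i0, hD⟩ := Finset.card_eq_one.mp hc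
      have hi0 : a i0 ≠ b i0 := by
        have : i0 ∈ univ.filter (fun i => a i ≠ b i) :=
          hD ▸ Finset.mem_singleton_self i0
        exact (Finset.mem_filter.mp this).2
      have hoth : ∀ j, j ≠ i0 → a j = b j := by
        intro j hj
        by_contra hcon
        have hmem : j ∈ univ.filter (fun i => a i ≠ b i) :=
          Finset.mem_filter.mpr ⟨mem_univ j, hcon⟩
        rw [hD, Finset.mem_singleton] at hmem
        exact hj hmem
      have ha : a = Function.update b i0 (a i0) := by
        funext j
        rcases eq_or_ne j i0 with rfl | hj
        · rw [Function.update_self]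
        · rw [Function.update_of_ne hj]; exact hoth j hj
      rw [Fintype.sum_eq_single i0]
      · have hEe : ∀ j ∈ univ.erase i0, E j (a j) = p j (a j) := by
          intro j hj
          simp only [hE]
          rw [if_pos (hoth j (Finset.ne_of_mem_erase hj))]
        rw [Finset.prod_congr rfl hEe]
        simp only [hg]
        rw [if_neg hi0, ← ha,
          ← Finset.mul_prod_erase univ (fun j => p j (a j)) (mem_univ i0)]
        ring
      · intro i hi
        simp only [hg]
        rw [if_pos (hoth i hi), zero_mul]
    · rw [if_neg hc]
      symm
      refine Finset.sum_eq_zero fun i _ => ?_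
      by_cases hib : a i = b i
      · simp only [hg]; rw [if_pos hib, zero_mul]
      · have hiD : i ∈ univ.filter (fun i => a i ≠ b i) :=
          Finset.mem_filter.mpr ⟨mem_univ i, hib⟩
        have hex : ∃ j ∈ univ.filter (fun i => a i ≠ b i), j ≠ i := by
          by_contra hno
          push_neg at hno
          exact hc (by
            rw [Finset.eq_singleton_iff_unique_mem.mpr ⟨hiD, fun j hj => hno j hj⟩]
            exact Finset.card_singleton i)
        obtain ⟨j, hjD, hji⟩ := hex
        have hj : a j ≠ b j := (Finset.mem_filter.mp hjD).2
        have hz : E j (a j) = 0 := by simp only [hE]; rw [if_neg hj]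
        rw [Finset.prod_eq_zero (Finset.mem_erase.mpr ⟨hji, mem_univ j⟩) hz, mul_zero]
  rw [Finset.sum_filter, Finset.sum_congr rfl fun a _ => claim a, Finset.sum_comm]
  refine Finset.sum_congr rfl fun i _ => ?_
  rw [sum_update_prod E i (g i)]
  congr 1
  · have hzero : g i (b i) = 0 := by simp [hg]
    rw [← Finset.sum_erase univ hzero]
    refine Finset.sum_congr rfl fun x hx => ?_
    simp only [hg]
    rw [if_neg (Finset.ne_of_mem_erase hx)]
  · refine Finset.prod_congr rfl fun j _ => ?_
    simp only [hE]
    rw [Finset.sum_ite_eq' univ (b j) (p j)]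
    simp

lemma sum_pure_mul (b : ∀ i, A i) (F : (∀ i, A i) → ℝ) :
    ∑ a, (∏ i, (if a i = b i then (1:ℝ) else 0)) * F a = F b := by
  rw [Fintype.sum_eq_single b]
  · simp
  · intro a ha
    obtain ⟨i, hi⟩ := Function.ne_iff.mp ha
    have hz : (if a i = b i then (1:ℝ) else 0) = 0 := if_neg hi
    rw [Finset.prod_eq_zero (mem_univ i) hz, zero_mul]

lemma Qbar_pure (astar : ∀ j, S → A j)
    (hpure : ∀ j s ai, θ j s ai = if ai = astar j s then 1 else 0)
    (i : Fin n) (s : S) (ai : A i) (f : S → (∀ i, A i) → ℝ) :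
    Qbar P θ γ f i s ai
      = Qval P θ γ f s (Function.update (fun j => astar j s) i ai) := by
  unfold Qbar
  rw [Fintype.sum_eq_single (Function.update (fun j => astar j s) i ai)]
  · rw [if_pos (Function.update_self i ai _)]
    have h1 : ∏ j ∈ univ.erase i,
        θ j s (Function.update (fun j => astar j s) i ai j) = 1 := by
      refine Finset.prod_eq_one fun j hj => ?_
      rw [Function.update_of_ne (Finset.ne_of_mem_erase hj), hpure, if_pos rfl]
    rw [h1, one_mul]
  · intro a ha
    by_cases hia : a i = ai
    · rw [if_pos hia]
      obtain ⟨j, hj⟩ := Function.ne_iff.mp ha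
      have hji : j ≠ i := by
        intro h; subst h; rw [Function.update_self] at hj; exact hj hia
      rw [Function.update_of_ne hji] at hj
      have hz : θ j s (a j) = 0 := by rw [hpure, if_neg hj]
      rw [Finset.prod_eq_zero (Finset.mem_erase.mpr ⟨hji, mem_univ j⟩) hz, zero_mul]
    · rw [if_neg hia]

lemma main_bound (p : ∀ i, A i → ℝ) (b : ∀ i, A i) (Adv : (∀ i, A i) → ℝ)
    (hp0 : ∀ i ai, 0 ≤ p i ai) (hp1 : ∀ i, ∑ ai, p i ai = 1)
    (Δ M : ℝ) (hΔ0 : 0 ≤ Δ) (hM0 : 0 ≤ M) (hM : ∀ a, |Adv a| ≤ M)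
    (hb : Adv b = 0)
    (hdev : ∀ i ai, ai ≠ b i → Adv (Function.update b i ai) ≤ -Δ)
    (hmm1 : ∑ i, ∑ ai ∈ univ.erase (b i), p i ai ≤ 1) :
    ∑ a, (∏ j, p j (a j)) * Adv a
      ≤ -(Δ * ((1 - ∑ i, ∑ ai ∈ univ.erase (b i), p i ai)
            * (∑ i, ∑ ai ∈ univ.erase (b i), p i ai)))
        + M * ((∑ i, ∑ ai ∈ univ.erase (b i), p i ai)
            * (∑ i, ∑ ai ∈ univ.erase (b i), p i ai)) := by
  classical
  set m : Fin n → ℝ := fun i => ∑ ai ∈ univ.erase (b i), p i ai with hm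
  set mm : ℝ := ∑ i, m i with hmm
  have hm0 : ∀ i, 0 ≤ m i := fun i => Finset.sum_nonneg fun ai _ => hp0 i ai
  have hmm0 : 0 ≤ mm := Finset.sum_nonneg fun i _ => hm0 i
  have hpb : ∀ i, p i (b i) = 1 - m i := by
    intro i
    have := Finset.add_sum_erase univ (p i) (mem_univ (b i))
    rw [hp1 i] at this
    simp only [hm]
    linarith
  have hpb0 : ∀ i, 0 ≤ p i (b i) := fun i => hp0 i (b i)
  have hpb1 : ∀ i, p i (b i) ≤ 1 := fun i => by rw [hpb i]; linarith [hm0 i]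
  have hprod_ge : ∀ T : Finset (Fin n), 1 - mm ≤ ∏ j ∈ T, p j (b j) := by
    intro T
    have h1 := one_sub_sum_le_prod T (fun j => p j (b j))
      (fun j _ => hpb0 j) (fun j _ => hpb1 j)
    have h2 : ∑ j ∈ T, (1 - p j (b j)) = ∑ j ∈ T, m j := by
      refine Finset.sum_congr rfl fun j _ => ?_
      rw [hpb j]; ring
    have h3 : ∑ j ∈ T, m j ≤ mm := by
      rw [hmm]
      exact Finset.sum_le_sum_of_subset_of_nonneg (Finset.subset_univ T)
        (fun j _ _ => hm0 j)
    rw [h2] at h1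
    linarith
  have hprod_le : ∀ T : Finset (Fin n), ∏ j ∈ T, p j (b j) ≤ 1 :=
    fun T => Finset.prod_le_one (fun j _ => hpb0 j) (fun j _ => hpb1 j)
  have hπ0 : ∀ a : ∀ i, A i, 0 ≤ ∏ j, p j (a j) :=
    fun a => Finset.prod_nonneg fun j _ => hp0 j (a j)
  have h1mm : 0 ≤ 1 - mm := by linarith
  -- split the sum
  rw [sum_split_card b (fun a => (∏ j, p j (a j)) * Adv a)]
  -- term 0
  have hT0 : ∑ a ∈ univ.filter (fun a : ∀ i, A i =>
      (univ.filter (fun i => a i ≠ b i)).card = 0), (∏ j, p j (a j)) * Adv a = 0 := by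
    rw [filter_card_zero_eq b, Finset.sum_singleton, hb, mul_zero]
  -- term 1
  have hT1 : ∑ a ∈ univ.filter (fun a : ∀ i, A i =>
      (univ.filter (fun i => a i ≠ b i)).card = 1), (∏ j, p j (a j)) * Adv a
      ≤ -(Δ * ((1 - mm) * mm)) := by
    rw [sum_card_one p b Adv]
    have hterm : ∀ i : Fin n,
        (∑ ai ∈ univ.erase (b i), p i ai * Adv (Function.update b i ai))
          * ∏ j ∈ univ.erase i, p j (b j)
        ≤ (-Δ * m i) * (1 - mm) := by
      intro i
      have hin : ∑ ai ∈ univ.erase (b i), p i ai * Adv (Function.update b i ai)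
          ≤ -Δ * m i := by
        simp only [hm]
        rw [Finset.mul_sum]
        refine Finset.sum_le_sum fun ai hai => ?_
        have := hdev i ai (Finset.ne_of_mem_erase hai)
        calc p i ai * Adv (Function.update b i ai) ≤ p i ai * (-Δ) :=
              mul_le_mul_of_nonneg_left this (hp0 i ai)
          _ = -Δ * p i ai := by ring
      have hco0 : 0 ≤ ∏ j ∈ univ.erase i, p j (b j) :=
        Finset.prod_nonneg fun j _ => hpb0 j
      have hco1 : 1 - mm ≤ ∏ j ∈ univ.erase i, p j (b j) := hprod_ge _
      have hneg : -Δ * m i ≤ 0 := by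
        have := mul_nonneg hΔ0 (hm0 i); linarith
      calc (∑ ai ∈ univ.erase (b i), p i ai * Adv (Function.update b i ai))
            * ∏ j ∈ univ.erase i, p j (b j)
          ≤ (-Δ * m i) * ∏ j ∈ univ.erase i, p j (b j) :=
            mul_le_mul_of_nonneg_right hin hco0
        _ ≤ (-Δ * m i) * (1 - mm) := by
            exact mul_le_mul_of_nonpos_left hco1 hneg
    calc ∑ i, (∑ ai ∈ univ.erase (b i), p i ai * Adv (Function.update b i ai))
          * ∏ j ∈ univ.erase i, p j (b j)
        ≤ ∑ i, (-Δ * m i) * (1 - mm) := Finset.sum_le_sum fun i _ => hterm i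
      _ = -(Δ * ((1 - mm) * mm)) := by
          rw [← Finset.sum_mul, ← Finset.mul_sum]
          ring
  -- term 2
  have hT2 : ∑ a ∈ univ.filter (fun a : ∀ i, A i =>
      2 ≤ (univ.filter (fun i => a i ≠ b i)).card), (∏ j, p j (a j)) * Adv a
      ≤ M * (mm * mm) := by
    have step1 : ∑ a ∈ univ.filter (fun a : ∀ i, A i =>
        2 ≤ (univ.filter (fun i => a i ≠ b i)).card), (∏ j, p j (a j)) * Adv a
        ≤ M * ∑ a ∈ univ.filter (fun a : ∀ i, A i =>
            2 ≤ (univ.filter (fun i => a i ≠ b i)).card), (∏ j, p j (a j)) := by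
      rw [Finset.mul_sum]
      refine Finset.sum_le_sum fun a _ => ?_
      calc (∏ j, p j (a j)) * Adv a ≤ (∏ j, p j (a j)) * M := by
            refine mul_le_mul_of_nonneg_left ?_ (hπ0 a)
            calc Adv a ≤ |Adv a| := le_abs_self _
              _ ≤ M := hM a
        _ = M * ∏ j, p j (a j) := by ring
    have hsum1 : ∑ a : ∀ i, A i, ∏ j, p j (a j) = 1 := by
      rw [sum_prod_pi]
      exact Finset.prod_eq_one fun i _ => hp1 i
    have hsplitπ := sum_split_card b (fun a : ∀ i, A i => ∏ j, p j (a j))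
    rw [hsum1] at hsplitπ
    have hP0 : ∑ a ∈ univ.filter (fun a : ∀ i, A i =>
        (univ.filter (fun i => a i ≠ b i)).card = 0), (∏ j, p j (a j))
        = ∏ j, p j (b j) := by
      rw [filter_card_zero_eq b, Finset.sum_singleton]
    have hP1 : ∑ a ∈ univ.filter (fun a : ∀ i, A i =>
        (univ.filter (fun i => a i ≠ b i)).card = 1), (∏ j, p j (a j))
        = ∑ i, m i * ∏ j ∈ univ.erase i, p j (b j) := by
      have := sum_card_one p b (fun _ => (1:ℝ))
      simp only [mul_one] at this
      rw [← this]
    have hP0ge : 1 - mm ≤ ∏ j, p j (b j) := hprod_ge univ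
    have hP1ge : (1 - mm) * mm ≤ ∑ i, m i * ∏ j ∈ univ.erase i, p j (b j) := by
      have : ∀ i : Fin n, (1 - mm) * m i ≤ m i * ∏ j ∈ univ.erase i, p j (b j) := by
        intro i
        calc (1 - mm) * m i = m i * (1 - mm) := by ring
          _ ≤ m i * ∏ j ∈ univ.erase i, p j (b j) :=
            mul_le_mul_of_nonneg_left (hprod_ge _) (hm0 i)
      calc (1 - mm) * mm = ∑ i, (1 - mm) * m i := by rw [← Finset.mul_sum]
        _ ≤ ∑ i, m i * ∏ j ∈ univ.erase i, p j (b j) :=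
          Finset.sum_le_sum fun i _ => this i
    have hmass : ∑ a ∈ univ.filter (fun a : ∀ i, A i =>
        2 ≤ (univ.filter (fun i => a i ≠ b i)).card), (∏ j, p j (a j))
        ≤ mm * mm := by
      rw [hP0, hP1] at hsplitπ
      nlinarith
    calc ∑ a ∈ univ.filter (fun a : ∀ i, A i =>
        2 ≤ (univ.filter (fun i => a i ≠ b i)).card), (∏ j, p j (a j)) * Adv a
        ≤ M * ∑ a ∈ univ.filter (fun a : ∀ i, A i =>
            2 ≤ (univ.filter (fun i => a i ≠ b i)).card), (∏ j, p j (a j)) := step1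
      _ ≤ M * (mm * mm) := mul_le_mul_of_nonneg_left hmass hM0
  rw [hT0, zero_add]
  have := add_le_add hT1 hT2
  simp only [hm, hmm] at *
  linarith

end MPGAux
open MPGAux in
/-- In a Markov potential game (with all states visited with positive probability),
strict Nash equilibria are exactly the strict local maxima of the total potential
function `Φ = Jval P · γ φ ρ` on the feasible set. -/
theorem stmt13 {n : ℕ} {S : Type} [Fintype S] [DecidableEq S]
    {A : Fin n → Type} [∀ i, Fintype (A i)] [∀ i, DecidableEq (A i)]
    (P : S → (∀ i, A i) → S → ℝ) (hP : stochMat P)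
    (r : Fin n → S → (∀ i, A i) → ℝ) (hr : ∀ i s a, 0 ≤ r i s a ∧ r i s a ≤ 1)
    (γ : ℝ) (hγ0 : 0 ≤ γ) (hγ1 : γ < 1)
    (ρ : S → ℝ) (hρ : initDist ρ)
    (φ : S → (∀ i, A i) → ℝ) (hpot : isPotential P γ r φ)
    (hd : ∀ θ : ∀ i, S → A i → ℝ, feasible θ → ∀ s, 0 < dvisit P θ γ ρ s)
    (θstar : ∀ i, S → A i → ℝ) :
    strictNE P γ r ρ θstar ↔
      (feasible θstar ∧ ∃ δ > (0 : ℝ), ∀ θ : ∀ i, S → A i → ℝ, feasible θ →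
        θ ≠ θstar → Real.sqrt (polNormSq θ θstar) ≤ δ →
        Jval P θ γ φ ρ < Jval P θstar γ φ ρ) := by
  have h1γ : (0:ℝ) < 1 - γ := by linarith
  have h1γ' : (0:ℝ) < 1/(1-γ) := by positivity
  constructor
  · -- strict NE → strict local max
    intro hNE
    have hθstar : feasible θstar := hNE.1
    refine ⟨hθstar, ?_⟩
    have hpure0 : ∀ i s, ∃ a0 : A i, ∀ ai, θstar i s ai = if ai = a0 then 1 else 0 :=
      fun i s => strictNE_pure hP hγ0 hγ1 hρ hpot hd hNE i s
    choose astar hpure using hpure0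
    have hAneg : ∀ i s (ai : A i), ai ≠ astar i s → Abar P θstar γ φ i s ai < 0 :=
      fun i s ai h => strictNE_Abar_neg hP hγ0 hγ1 hρ hpot hd hNE astar hpure i s ai h
    obtain ⟨Δ, hΔ0, hΔ⟩ := exists_pos_lb
      (fun x : (i : Fin n) × S × A i =>
        if x.2.2 ≠ astar x.1 x.2.1 then -(Abar P θstar γ φ x.1 x.2.1 x.2.2) else 1)
      (fun x => by
        by_cases h : x.2.2 ≠ astar x.1 x.2.1
        · rw [if_pos h]; linarith [hAneg x.1 x.2.1 x.2.2 h]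
        · rw [if_neg h]; norm_num)
    have hΔle : ∀ i s (ai : A i), ai ≠ astar i s → Abar P θstar γ φ i s ai ≤ -Δ := by
      intro i s ai h
      have h2 := hΔ ⟨i, s, ai⟩
      dsimp only at h2
      rw [if_pos h] at h2
      linarith
    obtain ⟨M0, hM0b⟩ := Finite.exists_le (fun x : S × (∀ j, A j) =>
      |Qval P θstar γ φ x.1 x.2 - Vval P θstar γ φ x.1|)
    set M : ℝ := max M0 0 with hMdef
    have hM0 : 0 ≤ M := le_max_right _ _
    have hM : ∀ s a, |Qval P θstar γ φ s a - Vval P θstar γ φ s| ≤ M :=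
      fun s a => le_trans (hM0b (s, a)) (le_max_left _ _)
    set K : ℝ := ∑ i : Fin n, (Fintype.card (A i) : ℝ) with hK
    have hK0 : 0 ≤ K := Finset.sum_nonneg fun i _ => by positivity
    have hK1 : (0:ℝ) < K + 1 := by linarith
    set mbar : ℝ := Δ / (2 * (Δ + M)) with hmbar
    have hΔM : 0 < Δ + M := by linarith
    have hmbar0 : 0 < mbar := by rw [hmbar]; positivity
    have hmbar1 : mbar ≤ 1/2 := by
      rw [hmbar, div_le_iff₀ (by linarith)]
      nlinarith
    have hkey : (Δ + M) * mbar = Δ/2 := by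
      rw [hmbar]
      field_simp
    refine ⟨mbar / (K + 1), by positivity, ?_⟩
    intro θ hθ hne hdist
    set mS : S → ℝ := fun s => ∑ i, ∑ ai ∈ univ.erase (astar i s), θ i s ai with hmS
    have hmS0 : ∀ s, 0 ≤ mS s := fun s =>
      Finset.sum_nonneg fun i _ => Finset.sum_nonneg fun ai _ => (hθ i s).1 ai
    have hsingle : ∀ i s (ai : A i), ai ≠ astar i s → θ i s ai ≤ mbar / (K + 1) := by
      intro i s ai h
      have t1 : (θ i s ai - θstar i s ai)^2 ≤ ∑ a, (θ i s a - θstar i s a)^2 :=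
        Finset.single_le_sum (f := fun a => (θ i s a - θstar i s a)^2)
          (fun a _ => sq_nonneg _) (mem_univ ai)
      have t2 : ∑ a, (θ i s a - θstar i s a)^2
          ≤ ∑ s', ∑ a, (θ i s' a - θstar i s' a)^2 :=
        Finset.single_le_sum (f := fun s' => ∑ a, (θ i s' a - θstar i s' a)^2)
          (fun s' _ => Finset.sum_nonneg fun a _ => sq_nonneg _)
          (mem_univ s)
      have t3 : ∑ s', ∑ a, (θ i s' a - θstar i s' a)^2
          ≤ ∑ j, ∑ s', ∑ a, (θ j s' a - θstar j s' a)^2 :=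
        Finset.single_le_sum
          (f := fun j => ∑ s', ∑ a, (θ j s' a - θstar j s' a)^2)
          (fun j _ => Finset.sum_nonneg fun s' _ =>
            Finset.sum_nonneg fun a _ => sq_nonneg _)
          (mem_univ i)
      have h1 : (θ i s ai - θstar i s ai)^2 ≤ polNormSq θ θstar := by
        unfold polNormSq
        exact le_trans t1 (le_trans t2 t3)
      have h2 : |θ i s ai - θstar i s ai| ≤ mbar/(K+1) := by
        rw [← Real.sqrt_sq_eq_abs]
        exact le_trans (Real.sqrt_le_sqrt h1) hdist
      have h3 : θstar i s ai = 0 := by rw [hpure i s ai, if_neg h]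
      calc θ i s ai = θ i s ai - θstar i s ai := by rw [h3]; ring
        _ ≤ |θ i s ai - θstar i s ai| := le_abs_self _
        _ ≤ mbar/(K+1) := h2
    have hmS_le : ∀ s, mS s ≤ mbar := by
      intro s
      have h5 : ∀ i : Fin n, ∑ ai ∈ univ.erase (astar i s), θ i s ai
          ≤ (Fintype.card (A i) : ℝ) * (mbar/(K+1)) := by
        intro i
        calc ∑ ai ∈ univ.erase (astar i s), θ i s ai
            ≤ ∑ _ai ∈ univ.erase (astar i s), (mbar/(K+1)) :=
              Finset.sum_le_sum fun ai hai =>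
                hsingle i s ai (Finset.ne_of_mem_erase hai)
          _ = ((univ.erase (astar i s)).card : ℝ) * (mbar/(K+1)) := by
              rw [Finset.sum_const, nsmul_eq_mul]
          _ ≤ (Fintype.card (A i) : ℝ) * (mbar/(K+1)) := by
              refine mul_le_mul_of_nonneg_right ?_ (by positivity)
              exact_mod_cast Finset.card_le_univ _
      calc mS s ≤ ∑ i, (Fintype.card (A i):ℝ) * (mbar/(K+1)) :=
            Finset.sum_le_sum fun i _ => h5 i
        _ = K * (mbar/(K+1)) := by rw [hK, Finset.sum_mul]
        _ ≤ mbar := by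
            rw [mul_div_assoc', div_le_iff₀ hK1]
            nlinarith
    have hVb : ∀ s, Vval P θstar γ φ s = Qval P θstar γ φ s (fun j => astar j s) := by
      intro s
      rw [← sum_jointPi_Q_eq_V hP hθstar hγ0 hγ1 φ s]
      calc ∑ a, jointPi θstar s a * Qval P θstar γ φ s a
          = ∑ a, (∏ j, (if a j = astar j s then (1:ℝ) else 0))
              * Qval P θstar γ φ s a := by
            refine Finset.sum_congr rfl fun a _ => ?_
            congr 1
            exact Finset.prod_congr rfl fun j _ => by rw [hpure]
        _ = Qval P θstar γ φ s (fun j => astar j s) := sum_pure_mul _ _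
    have hgs : ∀ s, ∑ a, jointPi θ s a *
        (Qval P θstar γ φ s a - Vval P θstar γ φ s)
        ≤ -(Δ * ((1 - mS s) * mS s)) + M * (mS s * mS s) := by
      intro s
      have hb_s : Qval P θstar γ φ s (fun j => astar j s) - Vval P θstar γ φ s = 0 := by
        rw [hVb s]; ring
      have hdev : ∀ (i : Fin n) (ai : A i), ai ≠ astar i s →
          Qval P θstar γ φ s (Function.update (fun j => astar j s) i ai)
            - Vval P θstar γ φ s ≤ -Δ := by
        intro i ai h
        have h2 := hΔle i s ai h
        have h3 : Abar P θstar γ φ i s ai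
            = Qval P θstar γ φ s (Function.update (fun j => astar j s) i ai)
              - Vval P θstar γ φ s := by
          unfold Abar
          rw [Qbar_pure astar hpure]
        linarith [h3 ▸ h2]
      exact main_bound (fun i => θ i s) (fun j => astar j s)
        (fun a => Qval P θstar γ φ s a - Vval P θstar γ φ s)
        (fun i ai => (hθ i s).1 ai) (fun i => (hθ i s).2)
        Δ M hΔ0.le hM0 (fun a => hM s a) hb_s hdev
        (by linarith [hmS_le s, hmbar1])
    have hgs2 : ∀ s, ∑ a, jointPi θ s a *
        (Qval P θstar γ φ s a - Vval P θstar γ φ s) ≤ -(Δ/2) * mS s := by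
      intro s
      have h6 : (Δ + M) * mS s ≤ Δ/2 := by
        rw [← hkey]
        exact mul_le_mul_of_nonneg_left (hmS_le s) hΔM.le
      have h7 := hgs s
      nlinarith [mul_le_mul_of_nonneg_left h6 (hmS0 s)]
    -- existence of a state where θ differs
    obtain ⟨i0, hi0⟩ := Function.ne_iff.mp hne
    obtain ⟨s0, hs0⟩ := Function.ne_iff.mp hi0
    have hms0 : 0 < mS s0 := by
      rcases lt_or_eq_of_le (hmS0 s0) with h | h
      · exact h
      · exfalso
        have hz : ∀ i ∈ (univ : Finset (Fin n)),
            ∑ ai ∈ univ.erase (astar i s0), θ i s0 ai = 0 :=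
          (Finset.sum_eq_zero_iff_of_nonneg fun i _ =>
            Finset.sum_nonneg fun ai _ => (hθ i s0).1 ai).mp h.symm
        have hz2 : ∀ ai ∈ univ.erase (astar i0 s0), θ i0 s0 ai = 0 :=
          (Finset.sum_eq_zero_iff_of_nonneg fun ai _ => (hθ i0 s0).1 ai).mp
            (hz i0 (mem_univ i0))
        apply hs0
        have hbig : θ i0 s0 (astar i0 s0) = 1 := by
          have := Finset.add_sum_erase univ (θ i0 s0) (mem_univ (astar i0 s0))
          rw [(hθ i0 s0).2] at this
          have hzz : ∑ ai ∈ univ.erase (astar i0 s0), θ i0 s0 ai = 0 :=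
            hz i0 (mem_univ i0)
          linarith
        funext ai
        rcases eq_or_ne ai (astar i0 s0) with rfl | hne2
        · rw [hbig, hpure, if_pos rfl]
        · rw [hz2 ai (Finset.mem_erase.mpr ⟨hne2, mem_univ ai⟩), hpure, if_neg hne2]
    have hpd := perf_diff hP hγ0 hγ1 hρ hθstar hθ φ
    have hpd2 : Jval P θ γ φ ρ - Jval P θstar γ φ ρ
        = (1/(1-γ)) * ∑ s, dvisit P θ γ ρ s *
            (∑ a, jointPi θ s a * (Qval P θstar γ φ s a - Vval P θstar γ φ s)) := by
      rw [hpd]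
      congr 1
      refine Finset.sum_congr rfl fun s _ => ?_
      congr 1
      have e : ∑ a, jointPi θ s a * (Qval P θstar γ φ s a - Vval P θstar γ φ s)
          = ∑ a, jointPi θ s a * Qval P θstar γ φ s a
            - (∑ a, jointPi θ s a) * Vval P θstar γ φ s := by
        rw [Finset.sum_mul, ← Finset.sum_sub_distrib]
        exact Finset.sum_congr rfl fun a _ => by ring
      rw [e, sum_jointPi hθ, one_mul]
    have hsumneg : ∑ s, dvisit P θ γ ρ s *
        (∑ a, jointPi θ s a * (Qval P θstar γ φ s a - Vval P θstar γ φ s)) < 0 := by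
      have hterm : ∀ s ∈ (univ : Finset S), dvisit P θ γ ρ s *
          (∑ a, jointPi θ s a * (Qval P θstar γ φ s a - Vval P θstar γ φ s))
            ≤ (fun _ : S => (0:ℝ)) s := by
        intro s _
        have hg0 : ∑ a, jointPi θ s a *
            (Qval P θstar γ φ s a - Vval P θstar γ φ s) ≤ 0 := by
          have := hgs2 s
          nlinarith [hmS0 s, hΔ0]
        exact mul_nonpos_of_nonneg_of_nonpos (hd θ hθ s).le hg0
      have hstrict : dvisit P θ γ ρ s0 *
          (∑ a, jointPi θ s0 a * (Qval P θstar γ φ s0 a - Vval P θstar γ φ s0))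
            < (fun _ : S => (0:ℝ)) s0 := by
        have hg0 : ∑ a, jointPi θ s0 a *
            (Qval P θstar γ φ s0 a - Vval P θstar γ φ s0) < 0 := by
          have := hgs2 s0
          nlinarith
        exact mul_neg_of_pos_of_neg (hd θ hθ s0) hg0
      have := Finset.sum_lt_sum hterm ⟨s0, mem_univ s0, hstrict⟩
      rwa [Finset.sum_const_zero] at this
    have : Jval P θ γ φ ρ - Jval P θstar γ φ ρ < 0 := by
      rw [hpd2]
      exact mul_neg_of_pos_of_neg h1γ' hsumneg
    linarith
  · -- strict local max → strict NE
    rintro ⟨hθstar, δ, hδ0, hloc⟩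
    refine ⟨hθstar, ?_⟩
    intro i θi' hθi' hne'
    have hA : ∀ s ai, Abar P θstar γ φ i s ai ≤ 0 := fun s ai =>
      localmax_Abar_nonpos hP hγ0 hγ1 hρ hθstar hδ0 hloc hd i s ai
    have hAneg : ∀ s (ai : A i),
        θstar i s ≠ (fun a => if a = ai then (1:ℝ) else 0) →
        Abar P θstar γ φ i s ai < 0 := fun s ai h =>
      localmax_Abar_neg hP hγ0 hγ1 hρ hθstar hδ0 hloc hd i s ai h
    have hpd := perf_diff_update hP hγ0 hγ1 hρ hθstar hθi' φ
    have hinnerle : ∀ s, ∑ ai, θi' s ai * Abar P θstar γ φ i s ai ≤ 0 := fun s =>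
      Finset.sum_nonpos fun ai _ =>
        mul_nonpos_of_nonneg_of_nonpos ((hθi' s).1 ai) (hA s ai)
    obtain ⟨s0, hs0⟩ := Function.ne_iff.mp hne'
    have hinner0 : ∑ ai, θi' s0 ai * Abar P θstar γ φ i s0 ai < 0 := by
      rcases lt_or_eq_of_le (hinnerle s0) with h | h
      · exact h
      · exfalso
        have hzero : ∀ ai ∈ (univ : Finset (A i)),
            θi' s0 ai * Abar P θstar γ φ i s0 ai = 0 :=
          (Finset.sum_eq_zero_iff_of_nonpos fun ai _ =>
            mul_nonpos_of_nonneg_of_nonpos ((hθi' s0).1 ai) (hA s0 ai)).mp h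
        have hex : ∃ ai0, 0 < θi' s0 ai0 := by
          by_contra hno
          push_neg at hno
          have : ∑ ai, θi' s0 ai = 0 :=
            Finset.sum_eq_zero fun ai _ =>
              le_antisymm (hno ai) ((hθi' s0).1 ai)
          rw [(hθi' s0).2] at this
          norm_num at this
        obtain ⟨ai0, hai0⟩ := hex
        have hAi0 : Abar P θstar γ φ i s0 ai0 = 0 := by
          rcases mul_eq_zero.mp (hzero ai0 (mem_univ ai0)) with h' | h'
          · exact absurd h' (ne_of_gt hai0)
          · exact h'
        have hstar0 : θstar i s0 = fun a => if a = ai0 then (1:ℝ) else 0 := by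
          by_contra hc2
          exact absurd hAi0 (ne_of_lt (hAneg s0 ai0 hc2))
        have hrest : ∀ ai, ai ≠ ai0 → θi' s0 ai = 0 := by
          intro ai hai
          by_contra hnz
          have hpos : 0 < θi' s0 ai :=
            lt_of_le_of_ne ((hθi' s0).1 ai) (Ne.symm hnz)
          have hAi1 : Abar P θstar γ φ i s0 ai = 0 := by
            rcases mul_eq_zero.mp (hzero ai (mem_univ ai)) with h' | h'
            · exact absurd h' (ne_of_gt hpos)
            · exact h'
          have hstar1 : θstar i s0 = fun a => if a = ai then (1:ℝ) else 0 := by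
            by_contra hc2
            exact absurd hAi1 (ne_of_lt (hAneg s0 ai hc2))
          have e1 := congrFun hstar0 ai0
          have e2 := congrFun hstar1 ai0
          rw [if_pos rfl] at e1
          rw [if_neg (Ne.symm hai)] at e2
          rw [e1] at e2
          norm_num at e2
        apply hs0
        have hsum1 : θi' s0 ai0 = 1 := by
          have := Finset.add_sum_erase univ (θi' s0) (mem_univ ai0)
          rw [(hθi' s0).2] at this
          have hzz : ∑ ai ∈ univ.erase ai0, θi' s0 ai = 0 :=
            Finset.sum_eq_zero fun ai hai =>
              hrest ai (Finset.ne_of_mem_erase hai)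
          linarith
        funext ai
        rcases eq_or_ne ai ai0 with rfl | hne2
        · rw [hsum1, hstar0]; simp
        · rw [hrest ai hne2, hstar0]
          simp [hne2]
    have hupd : feasible (Function.update θstar i θi') := update_feasible hθstar hθi'
    have hsumneg : ∑ s, dvisit P (Function.update θstar i θi') γ ρ s *
        (∑ ai, θi' s ai * Abar P θstar γ φ i s ai) < 0 := by
      have hterm : ∀ s ∈ (univ : Finset S),
          dvisit P (Function.update θstar i θi') γ ρ s *
            (∑ ai, θi' s ai * Abar P θstar γ φ i s ai) ≤ (fun _ : S => (0:ℝ)) s :=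
        fun s _ => mul_nonpos_of_nonneg_of_nonpos (hd _ hupd s).le (hinnerle s)
      have hstrict : dvisit P (Function.update θstar i θi') γ ρ s0 *
          (∑ ai, θi' s0 ai * Abar P θstar γ φ i s0 ai) < (fun _ : S => (0:ℝ)) s0 :=
        mul_neg_of_pos_of_neg (hd _ hupd s0) hinner0
      have := Finset.sum_lt_sum hterm ⟨s0, mem_univ s0, hstrict⟩
      rwa [Finset.sum_const_zero] at this
    have hφlt : Jval P (Function.update θstar i θi') γ φ ρ - Jval P θstar γ φ ρ < 0 := by
      rw [hpd]
      exact mul_neg_of_pos_of_neg h1γ' hsumneg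
    have hJeq := potential_J hpot hθstar hθi' hρ
    linarith
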